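/- arXiv:2302.07818 — 2 statements merged into one kernel-verified Lean document; each statement's English description precedes it below -/
import Mathlib

section
/- Let A and B be positive definite n×n complex matrices and let P be the orthogonal projection onto the range of (B − A)_+. Then for every λ > 0, tr(P A ((A + λI)^{-1} − (B + λI)^{-1})) ≥ 0. -/
open Matrix
open scoped ComplexOrder

/-- The matrix absolute value `|X| = (X*X)^{1/2}`, via the continuous functional calculus. -/
noncomputable def mAbs {m : ℕ} (X : Matrix (Fin m) (Fin m) ℂ) : Matrix (Fin m) (Fin m) ℂ :=
  cfc (fun x : ℝ => |x|) X

/-- The positive part `X₊ = (|X| + X)/2` of a Hermitian matrix. -/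
noncomputable def mPosPart {m : ℕ} (X : Matrix (Fin m) (Fin m) ℂ) : Matrix (Fin m) (Fin m) ℂ :=
  (2 : ℝ)⁻¹ • (mAbs X + X)

section Aux

variable {n : ℕ}

/-- Two matrices agreeing on all `mulVec`s are equal. -/
lemma ext_mulVec {M N : Matrix (Fin n) (Fin n) ℂ} (h : ∀ x, M *ᵥ x = N *ᵥ x) : M = N := by
  ext i j
  have := congrFun (h (Pi.single j 1)) i
  simpa using this

/-- The trace of a PSD matrix is nonnegative (in the complex order). -/
lemma trace_nonneg_of_posSemidef {M : Matrix (Fin n) (Fin n) ℂ} (hM : M.PosSemidef) :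
    0 ≤ M.trace := by
  rw [Matrix.trace]
  apply Finset.sum_nonneg
  intro i _
  have h := hM.dotProduct_mulVec_nonneg (Pi.single i 1)
  have hs : star (Pi.single i (1 : ℂ)) = (Pi.single i (1 : ℂ) : Fin n → ℂ) := by
    ext k
    by_cases hk : k = i <;> simp [Pi.single_apply, hk]
  rw [hs] at h
  simpa [single_one_dotProduct] using h

section MO

open scoped MatrixOrder

/-- The trace of a product of PSD matrices is nonnegative. -/
lemma trace_mul_nonneg {M N : Matrix (Fin n) (Fin n) ℂ}
    (hM : M.PosSemidef) (hN : N.PosSemidef) : 0 ≤ (M * N).trace := by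
  have h1 : M * N = CFC.sqrt M * (CFC.sqrt M * N) := by
    rw [← mul_assoc, CFC.sqrt_mul_sqrt_self M (Matrix.nonneg_iff_posSemidef.mpr hM)]
  rw [h1, Matrix.trace_mul_comm]
  have h2 := hN.conjTranspose_mul_mul_same (CFC.sqrt M)
  rw [(Matrix.nonneg_iff_posSemidef.mp (CFC.sqrt_nonneg M)).isHermitian.eq] at h2
  exact trace_nonneg_of_posSemidef h2

end MO

/-- The matrix inverse is antitone on positive definite matrices. -/
lemma inv_sub_inv_posSemidef {X Y : Matrix (Fin n) (Fin n) ℂ} (hX : X.PosDef) (hY : Y.PosDef)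
    (h : (Y - X).PosSemidef) : (X⁻¹ - Y⁻¹).PosSemidef := by
  have hXdet : IsUnit X.det := (Matrix.isUnit_iff_isUnit_det X).mp hX.isUnit
  have hYdet : IsUnit Y.det := (Matrix.isUnit_iff_isUnit_det Y).mp hY.isUnit
  have hXX : X * X⁻¹ = 1 := Matrix.mul_nonsing_inv X hXdet
  have hX'X : X⁻¹ * X = 1 := Matrix.nonsing_inv_mul X hXdet
  have hYY : Y * Y⁻¹ = 1 := Matrix.mul_nonsing_inv Y hYdet
  have hY'Y : Y⁻¹ * Y = 1 := Matrix.nonsing_inv_mul Y hYdet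
  have h1 : Y⁻¹ * (Y - X) * X⁻¹ = X⁻¹ - Y⁻¹ := by
    calc Y⁻¹ * (Y - X) * X⁻¹ = Y⁻¹ * Y * X⁻¹ - Y⁻¹ * (X * X⁻¹) := by noncomm_ring
      _ = X⁻¹ - Y⁻¹ := by rw [hY'Y, hXX, one_mul, mul_one]
  have key : X⁻¹ - Y⁻¹ =
      Y⁻¹ * (Y - X) * Y⁻¹ + (Y⁻¹ * (Y - X)) * X⁻¹ * ((Y - X) * Y⁻¹) := by
    calc X⁻¹ - Y⁻¹ = (X⁻¹ - Y⁻¹) * (Y * Y⁻¹) := by rw [hYY, mul_one]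
      _ = (Y⁻¹ * (Y - X) * X⁻¹) * (Y * Y⁻¹) := by rw [h1]
      _ = Y⁻¹ * (Y - X) * (X⁻¹ * X) * Y⁻¹
            + (Y⁻¹ * (Y - X)) * X⁻¹ * ((Y - X) * Y⁻¹) := by noncomm_ring
      _ = Y⁻¹ * (Y - X) * Y⁻¹ + (Y⁻¹ * (Y - X)) * X⁻¹ * ((Y - X) * Y⁻¹) := by
            rw [hX'X, mul_one]
  rw [key]
  have hYinvH : (Y⁻¹).IsHermitian := hY.inv.isHermitian
  have t1 : (Y⁻¹ * (Y - X) * Y⁻¹).PosSemidef := by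
    have := h.mul_mul_conjTranspose_same Y⁻¹
    rwa [hYinvH.eq] at this
  have t2 : ((Y⁻¹ * (Y - X)) * X⁻¹ * ((Y - X) * Y⁻¹)).PosSemidef := by
    have := hX.inv.posSemidef.conjTranspose_mul_mul_same ((Y - X) * Y⁻¹)
    rwa [Matrix.conjTranspose_mul, hYinvH.eq, h.isHermitian.eq] at this
  exact t1.add t2

/-- Structure of the positive part of a Hermitian matrix. -/
lemma posPart_spec {X : Matrix (Fin n) (Fin n) ℂ} (hX : X.IsHermitian) :
    (mPosPart X).PosSemidef ∧ (mPosPart X - X).PosSemidef ∧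
      mPosPart X * (mPosPart X - X) = 0 := by
  set U : Matrix (Fin n) (Fin n) ℂ := (Matrix.IsHermitian.eigenvectorUnitary hX : Matrix (Fin n) (Fin n) ℂ) with hU
  set E : Fin n → ℝ := hX.eigenvalues with hE
  have hU1 : U * star U = 1 :=
    (Matrix.mem_unitaryGroup_iff).mp (Matrix.IsHermitian.eigenvectorUnitary hX).2
  have hU2 : star U * U = 1 :=
    (Matrix.mem_unitaryGroup_iff').mp (Matrix.IsHermitian.eigenvectorUnitary hX).2
  set dg : (ℝ → ℝ) → Matrix (Fin n) (Fin n) ℂ :=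
    fun f => U * Matrix.diagonal (RCLike.ofReal ∘ f ∘ E) * star U with hdg
  have hmul : ∀ f g : ℝ → ℝ, dg f * dg g = dg (f * g) := by
    intro f g
    rw [hdg]
    simp only
    calc U * diagonal (RCLike.ofReal ∘ f ∘ E) * star U *
          (U * diagonal (RCLike.ofReal ∘ g ∘ E) * star U)
        = U * diagonal (RCLike.ofReal ∘ f ∘ E) * (star U * U) *
            diagonal (RCLike.ofReal ∘ g ∘ E) * star U := by noncomm_ring
      _ = U * (diagonal (RCLike.ofReal ∘ f ∘ E) * diagonal (RCLike.ofReal ∘ g ∘ E)) * star U := by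
            rw [hU2, mul_one]; noncomm_ring
      _ = U * diagonal (RCLike.ofReal ∘ (f * g) ∘ E) * star U := by
            rw [Matrix.diagonal_mul_diagonal]
            congr 1
            ext i
            simp [Function.comp]
  have hpos : ∀ f : ℝ → ℝ, (∀ x, 0 ≤ f x) → (dg f).PosSemidef := by
    intro f hf
    have hdiag : (Matrix.diagonal (RCLike.ofReal ∘ f ∘ E) : Matrix (Fin n) (Fin n) ℂ).PosSemidef := by
      rw [Matrix.posSemidef_diagonal_iff]
      intro i
      simpa using Complex.zero_le_real.mpr (hf (E i))
    have := hdiag.mul_mul_conjTranspose_same U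
    rwa [← Matrix.star_eq_conjTranspose] at this
  have hid : dg id = X := by
    rw [hdg]
    exact (hX.spectral_theorem).symm
  have habs : mAbs X = dg abs := by
    rw [mAbs, hX.cfc_eq, Matrix.IsHermitian.cfc, Unitary.conjStarAlgAut_apply]
  have hsmul : ∀ (r : ℝ) (f : ℝ → ℝ), r • dg f = dg (fun x => r * f x) := by
    intro r f
    rw [hdg]
    simp only
    have hd : (Matrix.diagonal (RCLike.ofReal ∘ (fun x => r * f x) ∘ E) : Matrix (Fin n) (Fin n) ℂ)
        = r • Matrix.diagonal (RCLike.ofReal ∘ f ∘ E) := by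
      ext i j
      by_cases hij : i = j <;>
        simp [Matrix.diagonal_apply, hij, Complex.real_smul]
    rw [hd, Matrix.mul_smul, Matrix.smul_mul]
  have hadd : ∀ f g : ℝ → ℝ, dg f + dg g = dg (fun x => f x + g x) := by
    intro f g
    rw [hdg]
    simp only
    have hfun : (RCLike.ofReal ∘ f ∘ E : Fin n → ℂ) + (RCLike.ofReal ∘ g ∘ E)
        = RCLike.ofReal ∘ (fun x => f x + g x) ∘ E := by
      funext i
      simp [Function.comp]
    have : (Matrix.diagonal (RCLike.ofReal ∘ f ∘ E) : Matrix (Fin n) (Fin n) ℂ)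
        + Matrix.diagonal (RCLike.ofReal ∘ g ∘ E)
        = Matrix.diagonal (RCLike.ofReal ∘ (fun x => f x + g x) ∘ E) := by
      ext i j
      by_cases hij : i = j <;>
        simp [Matrix.add_apply, Matrix.diagonal_apply, hij, Function.comp]
    rw [← this]
    noncomm_ring
  have hDg : mPosPart X = dg (fun x => 2⁻¹ * (|x| + x)) := by
    rw [mPosPart, habs]
    nth_rewrite 1 [← hid]
    rw [hadd, hsmul]
    congr 1
  have hNg : mPosPart X - X = dg (fun x => 2⁻¹ * (|x| - x)) := by
    have hneg : (-1 : ℝ) • dg id = dg (fun x => -x) := by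
      rw [hsmul]
      exact congrArg dg (funext fun x => by simp)
    have : mPosPart X - X = mPosPart X + (-1 : ℝ) • dg id := by
      rw [hid]; module
    rw [this, hneg, hDg, hadd]
    exact congrArg dg (funext fun x => by ring)
  refine ⟨?_, ?_, ?_⟩
  · rw [hDg]
    apply hpos
    intro x
    have := neg_abs_le x
    nlinarith [abs_nonneg x]
  · rw [hNg]
    apply hpos
    intro x
    have := le_abs_self x
    nlinarith
  · rw [hNg, hDg, hmul]
    have hzero : (fun x : ℝ => 2⁻¹ * (|x| + x)) * (fun x => 2⁻¹ * (|x| - x)) = fun _ => 0 := by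
      ext x
      have : |x| * |x| = x * x := abs_mul_abs_self x
      simp only [Pi.mul_apply]
      nlinarith
    rw [hzero, hdg]
    simp only
    have hz : (RCLike.ofReal ∘ (fun _ : ℝ => (0 : ℝ)) ∘ E : Fin n → ℂ) = 0 := by
      funext i
      simp [Function.comp]
    rw [hz]
    rw [show (Matrix.diagonal (0 : Fin n → ℂ)) = 0 from Matrix.diagonal_zero]
    rw [mul_zero, zero_mul]

end Aux

theorem stmt_2 {n : ℕ} (A B P : Matrix (Fin n) (Fin n) ℂ)
    (hA : A.PosDef) (hB : B.PosDef)
    (hP₁ : P.IsHermitian) (hP₂ : P * P = P)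
    (hP₃ : LinearMap.range P.mulVecLin = LinearMap.range (mPosPart (B - A)).mulVecLin) :
    ∀ l : ℝ, 0 < l →
      0 ≤ (P * A * ((A + l • (1 : Matrix (Fin n) (Fin n) ℂ))⁻¹
            - (B + l • (1 : Matrix (Fin n) (Fin n) ℂ))⁻¹)).trace := by
  intro l hl
  obtain ⟨hD, hN, hDN⟩ := posPart_spec (hB.isHermitian.sub hA.isHermitian)
  set Δ : Matrix (Fin n) (Fin n) ℂ := B - A with hΔdef
  set D : Matrix (Fin n) (Fin n) ℂ := mPosPart Δ with hDdef
  set N : Matrix (Fin n) (Fin n) ℂ := D - Δ with hNdef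
  -- P acts as the identity on the range of D
  have hPD : P * D = D := by
    apply ext_mulVec
    intro x
    have hx : D *ᵥ x ∈ LinearMap.range (mPosPart (B - A)).mulVecLin := ⟨x, rfl⟩
    rw [← hP₃] at hx
    obtain ⟨y, hy⟩ := hx
    rw [Matrix.mulVecLin_apply] at hy
    calc (P * D) *ᵥ x = P *ᵥ (D *ᵥ x) := by rw [Matrix.mulVec_mulVec]
      _ = P *ᵥ (P *ᵥ y) := by rw [hy]
      _ = (P * P) *ᵥ y := by rw [Matrix.mulVec_mulVec]
      _ = P *ᵥ y := by rw [hP₂]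
      _ = D *ᵥ x := hy
  have hDP : D * P = D := by
    have := congrArg Matrix.conjTranspose hPD
    rwa [Matrix.conjTranspose_mul, hD.isHermitian.eq, hP₁.eq] at this
  -- the kernel of D is contained in the kernel of P
  have hker : ∀ v, D *ᵥ v = 0 → P *ᵥ v = 0 := by
    intro v hv
    have hmem : P *ᵥ v ∈ LinearMap.range P.mulVecLin := ⟨v, rfl⟩
    rw [hP₃] at hmem
    obtain ⟨y, hy⟩ := hmem
    rw [Matrix.mulVecLin_apply] at hy
    have hcalc : star (P *ᵥ v) ⬝ᵥ (P *ᵥ v) = 0 := by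
      have hvecmul : star (P *ᵥ v) ᵥ* D = 0 := by
        have e1 : star (D *ᵥ (P *ᵥ v)) = star (P *ᵥ v) ᵥ* D := by
          rw [Matrix.star_mulVec, hD.isHermitian.eq]
        rw [← e1, Matrix.mulVec_mulVec, hDP, hv]
        simp
      calc star (P *ᵥ v) ⬝ᵥ (P *ᵥ v) = star (P *ᵥ v) ⬝ᵥ (D *ᵥ y) := by rw [hy]
        _ = (star (P *ᵥ v) ᵥ* D) ⬝ᵥ y := Matrix.dotProduct_mulVec _ _ _
        _ = 0 := by rw [hvecmul, zero_dotProduct]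
    exact dotProduct_star_self_eq_zero.mp hcalc
  have hPN : P * N = 0 := by
    apply ext_mulVec
    intro x
    have h0 : D *ᵥ (N *ᵥ x) = 0 := by
      rw [Matrix.mulVec_mulVec, hDN, Matrix.zero_mulVec]
    rw [← Matrix.mulVec_mulVec (M := P)]  -- may need adjusting
    rw [hker _ h0, Matrix.zero_mulVec]
  have hPΔ : P * Δ = D := by
    have hΔDN : Δ = D - N := by rw [hNdef]; abel
    rw [hΔDN, mul_sub, hPD, hPN, sub_zero]
  -- positivity facts
  have hPpsd : P.PosSemidef := by
    have := Matrix.posSemidef_conjTranspose_mul_self P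
    rwa [hP₁.eq, hP₂] at this
  have h1Ppsd : ((1 : Matrix (Fin n) (Fin n) ℂ) - P).PosSemidef := by
    have h1 : ((1 : Matrix (Fin n) (Fin n) ℂ) - P)ᴴ = 1 - P := by
      rw [Matrix.conjTranspose_sub, Matrix.conjTranspose_one, hP₁.eq]
    have h2 : ((1 : Matrix (Fin n) (Fin n) ℂ) - P) * (1 - P) = 1 - P := by
      rw [mul_sub, sub_mul, sub_mul, hP₂]
      noncomm_ring
    have := Matrix.posSemidef_conjTranspose_mul_self ((1 : Matrix (Fin n) (Fin n) ℂ) - P)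
    rwa [h1, h2] at this
  have hLpsd : ((l : ℝ) • (1 : Matrix (Fin n) (Fin n) ℂ)).PosSemidef := by
    have hdiag : (l : ℝ) • (1 : Matrix (Fin n) (Fin n) ℂ)
        = Matrix.diagonal (fun _ => (l : ℂ)) := by
      ext i j
      by_cases hij : i = j <;>
        simp [Matrix.one_apply, Matrix.diagonal_apply, hij, Complex.real_smul]
    rw [hdiag]
    exact Matrix.PosSemidef.diagonal fun i => by
      simpa using Complex.zero_le_real.mpr hl.le
  set L : Matrix (Fin n) (Fin n) ℂ := (l : ℝ) • (1 : Matrix (Fin n) (Fin n) ℂ) with hLdef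
  set Al : Matrix (Fin n) (Fin n) ℂ := A + L with hAldef
  set Bl : Matrix (Fin n) (Fin n) ℂ := B + L with hBldef
  set Cl : Matrix (Fin n) (Fin n) ℂ := A + D + L with hCldef
  have hAl : Al.PosDef := hA.add_posSemidef hLpsd
  have hBl : Bl.PosDef := hB.add_posSemidef hLpsd
  have hCl : Cl.PosDef := (hA.add_posSemidef hD).add_posSemidef hLpsd
  have hCB : Cl - Bl = N := by rw [hCldef, hBldef, hNdef, hΔdef]; abel
  have hCA : Cl - Al = D := by rw [hCldef, hAldef]; abel
  -- inverse identities
  have hAlinv : Al * Al⁻¹ = 1 :=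
    Matrix.mul_nonsing_inv Al ((Matrix.isUnit_iff_isUnit_det Al).mp hAl.isUnit)
  have hBlinv : Bl * Bl⁻¹ = 1 :=
    Matrix.mul_nonsing_inv Bl ((Matrix.isUnit_iff_isUnit_det Bl).mp hBl.isUnit)
  have hClinv : Cl * Cl⁻¹ = 1 :=
    Matrix.mul_nonsing_inv Cl ((Matrix.isUnit_iff_isUnit_det Cl).mp hCl.isUnit)
  have hBiCi : (Bl⁻¹ - Cl⁻¹).PosSemidef :=
    inv_sub_inv_posSemidef hBl hCl (by rw [hCB]; exact hN)
  have hAiCi : (Al⁻¹ - Cl⁻¹).PosSemidef :=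
    inv_sub_inv_posSemidef hAl hCl (by rw [hCA]; exact hD)
  -- A * Al⁻¹ = 1 - l • Al⁻¹  etc.
  have hAeq : A = Al - L := by rw [hAldef]; abel
  have hAeq2 : A = Bl - L - Δ := by rw [hBldef, hΔdef]; abel
  have hAeq3 : A = Cl - L - D := by rw [hCldef]; abel
  have hAAi : A * Al⁻¹ = 1 - L * Al⁻¹ := by
    rw [hAeq, sub_mul, hAlinv]
  have hABi : A * Bl⁻¹ = 1 - L * Bl⁻¹ - Δ * Bl⁻¹ := by
    rw [hAeq2, sub_mul, sub_mul, hBlinv]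
  have hACi : A * Cl⁻¹ = 1 - L * Cl⁻¹ - D * Cl⁻¹ := by
    rw [hAeq3, sub_mul, sub_mul, hClinv]
  -- main matrix identity
  have hmain : P * A * (Al⁻¹ - Bl⁻¹)
      = D * Bl⁻¹ + P * (L * Bl⁻¹) - P * (L * Al⁻¹) := by
    calc P * A * (Al⁻¹ - Bl⁻¹) = P * (A * Al⁻¹) - P * (A * Bl⁻¹) := by noncomm_ring
      _ = P * (1 - L * Al⁻¹) - P * (1 - L * Bl⁻¹ - Δ * Bl⁻¹) := by rw [hAAi, hABi]
      _ = P * (Δ * Bl⁻¹) + P * (L * Bl⁻¹) - P * (L * Al⁻¹) := by noncomm_ring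
      _ = D * Bl⁻¹ + P * (L * Bl⁻¹) - P * (L * Al⁻¹) := by rw [← mul_assoc, hPΔ]
  -- identity: L * Al⁻¹ - L * Cl⁻¹ = A * Cl⁻¹ + D * Cl⁻¹ - A * Al⁻¹
  have hI2 : L * Al⁻¹ - L * Cl⁻¹ = A * Cl⁻¹ + D * Cl⁻¹ - A * Al⁻¹ := by
    have e1 : L * Al⁻¹ = 1 - A * Al⁻¹ := by rw [hAAi]; abel
    have e2 : L * Cl⁻¹ = 1 - A * Cl⁻¹ - D * Cl⁻¹ := by rw [hACi]; abel
    rw [e1, e2]; abel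
  -- trace inequalities
  have k1 : 0 ≤ (P * (Bl⁻¹ - Cl⁻¹)).trace := trace_mul_nonneg hPpsd hBiCi
  have k2 : 0 ≤ (((1 : Matrix (Fin n) (Fin n) ℂ) - P) * (Al⁻¹ - Cl⁻¹)).trace :=
    trace_mul_nonneg h1Ppsd hAiCi
  have k3 : 0 ≤ (A * (Al⁻¹ - Cl⁻¹)).trace := trace_mul_nonneg hA.posSemidef hAiCi
  have k4 : 0 ≤ (D * (Bl⁻¹ - Cl⁻¹)).trace := trace_mul_nonneg hD hBiCi
  -- scalar conversions
  have hLmul : ∀ X : Matrix (Fin n) (Fin n) ℂ, L * X = (l : ℝ) • X := by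
    intro X
    rw [hLdef, smul_mul_assoc, one_mul]
  have htrL : ∀ X : Matrix (Fin n) (Fin n) ℂ, (L * X).trace = (l : ℂ) * X.trace := by
    intro X
    rw [hLmul, Matrix.trace_smul, Complex.real_smul]
  have htrPL : ∀ X : Matrix (Fin n) (Fin n) ℂ,
      (P * (L * X)).trace = (l : ℂ) * (P * X).trace := by
    intro X
    rw [hLmul, mul_smul_comm, Matrix.trace_smul, Complex.real_smul]
  have hl0 : 0 ≤ (l : ℂ) := by exact_mod_cast hl.le
  -- abbreviations
  set tPA : ℂ := (P * Al⁻¹).trace with htPA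
  set tPB : ℂ := (P * Bl⁻¹).trace with htPB
  set tPC : ℂ := (P * Cl⁻¹).trace with htPC
  set tAA : ℂ := (A * Al⁻¹).trace with htAA
  set tAC : ℂ := (A * Cl⁻¹).trace with htAC
  set tDB : ℂ := (D * Bl⁻¹).trace with htDB
  set tDC : ℂ := (D * Cl⁻¹).trace with htDC
  set tA : ℂ := (Al⁻¹).trace with htA
  set tC : ℂ := (Cl⁻¹).trace with htC
  have k1' : tPC ≤ tPB := by
    rw [mul_sub, Matrix.trace_sub] at k1
    exact sub_nonneg.mp k1
  have k2' : tPA - tPC ≤ tA - tC := by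
    have e : ((1 : Matrix (Fin n) (Fin n) ℂ) - P) * (Al⁻¹ - Cl⁻¹)
        = (Al⁻¹ - Cl⁻¹) - (P * Al⁻¹ - P * Cl⁻¹) := by noncomm_ring
    rw [e, Matrix.trace_sub, Matrix.trace_sub, Matrix.trace_sub] at k2
    exact sub_nonneg.mp k2
  have k3' : tAC ≤ tAA := by
    rw [mul_sub, Matrix.trace_sub] at k3
    exact sub_nonneg.mp k3
  have k4' : tDC ≤ tDB := by
    rw [mul_sub, Matrix.trace_sub] at k4
    exact sub_nonneg.mp k4
  -- trace of the identity hI2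
  have hI2t : (l : ℂ) * (tA - tC) = tAC + tDC - tAA := by
    have := congrArg Matrix.trace hI2
    rw [Matrix.trace_sub, Matrix.trace_sub, Matrix.trace_add, htrL, htrL] at this
    rw [← this]
    ring
  -- final combination
  rw [hmain, Matrix.trace_sub, Matrix.trace_add, htrPL, htrPL]
  rw [sub_nonneg]
  have step1 : (l : ℂ) * tPA ≤ (l : ℂ) * tPC + (l : ℂ) * (tA - tC) := by
    have := mul_le_mul_of_nonneg_left k2' hl0
    calc (l : ℂ) * tPA = (l : ℂ) * (tPA - tPC) + (l : ℂ) * tPC := by ring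
      _ ≤ (l : ℂ) * (tA - tC) + (l : ℂ) * tPC := add_le_add_left this _
      _ = (l : ℂ) * tPC + (l : ℂ) * (tA - tC) := by ring
  have step2 : (l : ℂ) * (tA - tC) ≤ tDB := by
    rw [hI2t]
    calc tAC + tDC - tAA ≤ tAA + tDC - tAA := by
          exact sub_le_sub_right (add_le_add_left k3' _) _
      _ = tDC := by ring
      _ ≤ tDB := k4'
  have step3 : (l : ℂ) * tPC ≤ (l : ℂ) * tPB := mul_le_mul_of_nonneg_left k1' hl0
  calc (l : ℂ) * tPA ≤ (l : ℂ) * tPC + (l : ℂ) * (tA - tC) := step1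
    _ ≤ (l : ℂ) * tPB + tDB := add_le_add step3 step2
    _ = tDB + (l : ℂ) * tPB := by ring
end

section
/- For positive definite operators A and B, if AB + BA ≥ 0 then A + B − |A − B| ≥ 0, i.e., |A − B| ≤ A + B. -/
open Matrix
open scoped ComplexOrder

/-- Key: if `S ≥ 0`, `T > 0` and `T*T - S*S ≥ 0`, then `T - S ≥ 0`. -/
lemma key_sqrt_mono {n : ℕ} (S T : Matrix (Fin n) (Fin n) ℂ) (hS : S.PosSemidef) (hT : T.PosDef)
    (hQ : (T * T - S * S).PosSemidef) : (T - S).PosSemidef := by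
  have hH : (T - S).IsHermitian := hT.1.sub hS.1
  refine hH.posSemidef_iff_eigenvalues_nonneg.mpr fun j => ?_
  set v : Fin n → ℂ := ⇑(hH.eigenvectorBasis j) with hv
  set lam : ℝ := hH.eigenvalues j with hlam
  have hv0 : v ≠ 0 := by
    intro h0
    have := (hH.eigenvectorBasis.orthonormal).1 j
    rw [show (hH.eigenvectorBasis j : EuclideanSpace ℂ (Fin n)) = 0 from
      (WithLp.ofLp_eq_zero 2).mp h0] at this
    simp at this
  have heig : (T - S) *ᵥ v = lam • v := hH.mulVec_eigenvectorBasis j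
  have h1 : T * T - S * S = T * (T - S) + (T - S) * S := by noncomm_ring
  have e1 : star v ⬝ᵥ ((T * (T - S)) *ᵥ v) = (lam : ℂ) * (star v ⬝ᵥ (T *ᵥ v)) := by
    rw [← mulVec_mulVec, heig, mulVec_smul, dotProduct_smul]
    simp [Complex.real_smul]
  have e2 : star v ⬝ᵥ (((T - S) * S) *ᵥ v) = (lam : ℂ) * (star v ⬝ᵥ (S *ᵥ v)) := by
    rw [← mulVec_mulVec, dotProduct_mulVec]
    have : star v ᵥ* (T - S) = lam • star v := by
      have := congrArg star heig
      rw [star_mulVec, hH.eq] at this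
      rw [this]
      simp [star_smul]
    rw [this, smul_dotProduct]
    simp [Complex.real_smul]
  have hpos : (0 : ℂ) ≤ (lam : ℂ) * (star v ⬝ᵥ (T *ᵥ v) + star v ⬝ᵥ (S *ᵥ v)) := by
    have := hQ.dotProduct_mulVec_nonneg v
    rw [h1, add_mulVec, dotProduct_add, e1, e2, ← mul_add] at this
    exact this
  have hTv : (0 : ℂ) < star v ⬝ᵥ (T *ᵥ v) := hT.dotProduct_mulVec_pos hv0
  have hSv : (0 : ℂ) ≤ star v ⬝ᵥ (S *ᵥ v) := hS.dotProduct_mulVec_nonneg v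
  have hc : (0 : ℂ) < star v ⬝ᵥ (T *ᵥ v) + star v ⬝ᵥ (S *ᵥ v) :=
    lt_of_lt_of_le hTv (le_add_of_nonneg_right hSv)
  set c : ℂ := star v ⬝ᵥ (T *ᵥ v) + star v ⬝ᵥ (S *ᵥ v)
  rw [Complex.lt_def] at hc
  rw [Complex.le_def] at hpos
  simp only [Complex.zero_re, Complex.zero_im, Complex.mul_re, Complex.mul_im,
    Complex.ofReal_re, Complex.ofReal_im] at hpos hc
  have : 0 ≤ lam * c.re := by
    have h := hpos.1
    rw [← hc.2] at h
    simpa using h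
  exact nonneg_of_mul_nonneg_right (mul_comm lam c.re ▸ this) hc.1

lemma mAbs_posSemidef {n : ℕ} {X : Matrix (Fin n) (Fin n) ℂ} (hX : X.IsHermitian) :
    (mAbs X).PosSemidef := by
  rw [mAbs, hX.cfc_eq]
  unfold Matrix.IsHermitian.cfc
  refine (posSemidef_diagonal_iff.mpr fun i => ?_).mul_mul_conjTranspose_same _
  simp

lemma mAbs_sq {n : ℕ} {X : Matrix (Fin n) (Fin n) ℂ} (hX : X.IsHermitian) :
    mAbs X * mAbs X = X * X := by
  have hsa : IsSelfAdjoint X := hX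
  rw [mAbs, ← cfc_mul (fun x : ℝ => |x|) (fun x : ℝ => |x|) X]
  calc cfc (fun x : ℝ => |x| * |x|) X = cfc (fun x : ℝ => x * x) X :=
        cfc_congr fun x _ => abs_mul_abs_self x
    _ = X * X := by rw [cfc_mul (fun x : ℝ => x) (fun x : ℝ => x) X, cfc_id' ℝ X]

theorem stmt_17 {n : ℕ} (A B : Matrix (Fin n) (Fin n) ℂ)
    (hA : A.PosDef) (hB : B.PosDef) (hAB : (A * B + B * A).PosSemidef) :
    (A + B - mAbs (A - B)).PosSemidef := by
  have hX : (A - B).IsHermitian := hA.1.sub hB.1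
  have hS := mAbs_posSemidef hX
  have hT : (A + B).PosDef := hA.add hB
  have hQ : ((A + B) * (A + B) - mAbs (A - B) * mAbs (A - B)).PosSemidef := by
    rw [mAbs_sq hX, show (A + B) * (A + B) - (A - B) * (A - B)
      = (A * B + B * A) + (A * B + B * A) by noncomm_ring]
    exact hAB.add hAB
  exact key_sqrt_mono _ _ hS hT hQ
end
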